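/- Let G be a finite simple graph with n vertices. Then G admits a proper 3-coloring if and only if the graph G × K₃ admits a proper 3-coloring (I₁, I₂, I₃) whose three color classes satisfy #I₁ = #I₂ = #I₃ = n. -/

import Mathlib

open Finset

/-- `I₁, …, I_k` is a partition of the (finite) type `V`: the classes are pairwise
disjoint and they cover `V`. -/
def IsPartitionFam {V : Type*} {k : ℕ} (I : Fin k → Finset V) : Prop :=
  (∀ i j, i ≠ j → Disjoint (I i) (I j)) ∧ ∀ v, ∃ j, v ∈ I j

/-- The family of classes `I₁, …, I_k` is a proper coloring of `H`: no class contains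
two adjacent vertices. -/
def ProperFam {V : Type*} (H : SimpleGraph V) {k : ℕ} (I : Fin k → Finset V) : Prop :=
  ∀ j, ∀ u ∈ I j, ∀ v ∈ I j, ¬ H.Adj u v

/-- A finite simple graph `G` with `n` vertices admits a proper
3-coloring iff the box product `G □ K₃` admits a proper 3-coloring all of whose three
color classes have cardinality `n`. -/
theorem stmt_0 {V : Type*} [Fintype V] (G : SimpleGraph V) (n : ℕ)
    (hn : Fintype.card V = n) :
    (∃ I : Fin 3 → Finset V, IsPartitionFam I ∧ ProperFam G I) ↔
      ∃ I : Fin 3 → Finset (V × Fin 3),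
        IsPartitionFam I ∧ ProperFam (G.boxProd (SimpleGraph.completeGraph (Fin 3))) I ∧
          ∀ j, (I j).card = n := by
  constructor
  · rintro ⟨I, ⟨hdisj, hcov⟩, hprop⟩
    classical
    -- unique color function
    have huniq : ∀ v (c c' : Fin 3), v ∈ I c → v ∈ I c' → c = c' := by
      intro v c c' hc hc'
      by_contra h
      exact (Finset.disjoint_left.mp (hdisj c c' h) hc) hc'
    let f : V → Fin 3 := fun v => (hcov v).choose
    have hf : ∀ v, v ∈ I (f v) := fun v => (hcov v).choose_spec
    refine ⟨fun j => Finset.univ.filter (fun p : V × Fin 3 => p.1 ∈ I (j - p.2)), ⟨?_, ?_⟩, ?_, ?_⟩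
    · intro i j hij
      rw [Finset.disjoint_left]
      intro p hp hq
      simp only [Finset.mem_filter] at hp hq
      exact (Finset.disjoint_left.mp (hdisj _ _ (fun h => hij (by
        have := sub_left_injective (G := Fin 3) h; simpa using this)) ) hp.2) hq.2
    · intro p
      exact ⟨f p.1 + p.2, by simp [hf p.1]⟩
    · intro j p hp q hq hadj
      simp only [Finset.mem_filter] at hp hq
      rw [SimpleGraph.boxProd_adj] at hadj
      rcases hadj with ⟨hGadj, h2⟩ | ⟨hne, h1⟩
      · rw [h2] at hp
        exact hprop _ _ hp.2 _ hq.2 hGadj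
      · rw [h1] at hp
        have : j - p.2 = j - q.2 := huniq _ _ _ hp.2 hq.2
        exact (hne : p.2 ≠ q.2) (by
          have := sub_right_injective (G := Fin 3) this; simpa using this)
    · intro j
      rw [← hn, ← Finset.card_univ]
      apply Finset.card_bij (fun p _ => p.1)
      · intro p hp; exact Finset.mem_univ _
      · intro p hp q hq h
        simp only [Finset.mem_filter] at hp hq
        have h2 : f p.1 = j - p.2 := huniq _ _ _ (hf p.1) hp.2
        have h3 : f q.1 = j - q.2 := huniq _ _ _ (hf q.1) hq.2
        have : j - p.2 = j - q.2 := by rw [← h2, ← h3, h]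
        have h4 : p.2 = q.2 := by
          have := sub_right_injective (G := Fin 3) this; simpa using this
        exact Prod.ext h h4
      · intro v _
        refine ⟨(v, j - f v), ?_, rfl⟩
        simp [hf v]
  · rintro ⟨J, ⟨hdisj, hcov⟩, hprop, _⟩
    classical
    refine ⟨fun j => Finset.univ.filter (fun v => (v, (0 : Fin 3)) ∈ J j), ⟨?_, ?_⟩, ?_⟩
    · intro i j hij
      rw [Finset.disjoint_left]
      intro v hv hw
      simp only [Finset.mem_filter] at hv hw
      exact Finset.disjoint_left.mp (hdisj i j hij) hv.2 hw.2
    · intro v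
      obtain ⟨j, hj⟩ := hcov (v, (0 : Fin 3))
      exact ⟨j, by simp [hj]⟩
    · intro j u hu v hv hadj
      simp only [Finset.mem_filter] at hu hv
      exact hprop j (u, 0) hu.2 (v, 0) hv.2 (SimpleGraph.boxProd_adj.mpr (Or.inl ⟨hadj, rfl⟩))
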